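/- Let g := gcd(a1−a2, b1−b2) and let p be a prime with p ∤ D and p > 2*D/g + 1. Then for every integer k ≥ 1 and every integer i with 0 ≤ i ≤ x'_k − x_k, the minimum of h(S) over all subsets S ⊆ M(Δ) with #S = x_k + i equals h(T_k) + i*k*(p−1). -/

import Mathlib

open Finset

noncomputable section

/-- The weight of a lattice point `P`: `w(P) = ((b1-b2)*x + (a2-a1)*y) / D`
where `D = a2*b1 - a1*b2`. -/
def wt (a1 b1 a2 b2 : ℤ) (P : ℤ × ℤ) : ℚ :=
  (((b1 - b2) * P.1 + (a2 - a1) * P.2 : ℤ) : ℚ) / ((a2 * b1 - a1 * b2 : ℤ) : ℚ)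

/-- The lattice points of the cone spanned by the triangle with vertices
`O`, `P1 = (a1,b1)`, `P2 = (a2,b2)`. -/
def MDelta (a1 b1 a2 b2 : ℤ) : Set (ℤ × ℤ) :=
  {P | ∃ s t : ℚ, 0 ≤ s ∧ 0 ≤ t ∧
    (P.1 : ℚ) = s * a1 + t * a2 ∧ (P.2 : ℚ) = s * b1 + t * b2}

/-- The lattice generated by `P1` and `P2`. -/
def Lambda (a1 b1 a2 b2 : ℤ) : Set (ℤ × ℤ) :=
  {P | ∃ m n : ℤ, P = (m * a1 + n * a2, m * b1 + n * b2)}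

/-- The lattice points of the fundamental parallelogram
`{s*P1 + t*P2 : 0 ≤ s,t < 1}`. -/
def squareInt (a1 b1 a2 b2 : ℤ) : Set (ℤ × ℤ) :=
  {P | ∃ s t : ℚ, 0 ≤ s ∧ s < 1 ∧ 0 ≤ t ∧ t < 1 ∧
    (P.1 : ℚ) = s * a1 + t * a2 ∧ (P.2 : ℚ) = s * b1 + t * b2}

/-- `h(S, τ) = Σ_{P ∈ S} ⌈w(p·τ(P) - P)⌉` for a multiset indexed by `f` and a
permutation `τ` of the indices. -/
def hTau (p a1 b1 a2 b2 : ℤ) {n : ℕ} (f : Fin n → ℤ × ℤ)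
    (τ : Equiv.Perm (Fin n)) : ℤ :=
  ∑ i, ⌈wt a1 b1 a2 b2 (p • f (τ i) - f i)⌉

/-- `h2(S, τ) = Σ_{P ∈ S} R(w(p·τ(P) - P))` where `R(r) = ⌈r⌉ - r`. -/
def h2Tau (p a1 b1 a2 b2 : ℤ) {n : ℕ} (f : Fin n → ℤ × ℤ)
    (τ : Equiv.Perm (Fin n)) : ℚ :=
  ∑ i, ((⌈wt a1 b1 a2 b2 (p • f (τ i) - f i)⌉ : ℚ)
        - wt a1 b1 a2 b2 (p • f (τ i) - f i))

/-- A canonical indexing of a multiset. -/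
def listFn (S : Multiset (ℤ × ℤ)) : Fin S.toList.length → ℤ × ℤ := S.toList.get

/-- `h(S)`: the minimum of `h(S,τ)` over all permutations `τ` of `S`. -/
def hMin (p a1 b1 a2 b2 : ℤ) (S : Multiset (ℤ × ℤ)) : ℤ :=
  Finset.univ.inf' (Finset.univ_nonempty_iff.mpr ⟨1⟩)
    fun τ : Equiv.Perm (Fin S.toList.length) => hTau p a1 b1 a2 b2 (listFn S) τ

/-- `h2(S)`: the minimum of `h2(S,τ)` over all permutations `τ` of `S`. -/
def h2Min (p a1 b1 a2 b2 : ℤ) (S : Multiset (ℤ × ℤ)) : ℚ :=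
  Finset.univ.inf' (Finset.univ_nonempty_iff.mpr ⟨1⟩)
    fun τ : Equiv.Perm (Fin S.toList.length) => h2Tau p a1 b1 a2 b2 (listFn S) τ

namespace St11



/-- ceiling-of-division: subadditivity -/
lemma ceil_pair (D : ℤ) (x y : ℤ) :
    ⌈((x + y : ℤ) : ℚ) / (D : ℚ)⌉ ≤ ⌈((x : ℤ) : ℚ) / D⌉ + ⌈((y : ℤ) : ℚ) / D⌉ := by
  have h : ((x + y : ℤ) : ℚ) / (D : ℚ) = (x : ℚ) / D + (y : ℚ) / D := by push_cast; ring
  rw [h]; exact Int.ceil_add_le _ _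

lemma ceil_floor (D : ℤ) (x y : ℤ) :
    ⌈((x : ℤ) : ℚ) / (D : ℚ)⌉ + ⌊((y : ℤ) : ℚ) / (D : ℚ)⌋ ≤ ⌈((x + y : ℤ) : ℚ) / D⌉ := by
  have h : ((x + y : ℤ) : ℚ) / (D : ℚ) = (x : ℚ) / D + (y : ℚ) / D := by push_cast; ring
  rw [h]
  calc ⌈(x : ℚ) / D⌉ + ⌊(y : ℚ) / D⌋ = ⌈(x : ℚ) / D + (⌊(y:ℚ)/D⌋ : ℚ)⌉ := by
        rw [Int.ceil_add_intCast]
    _ ≤ ⌈(x : ℚ) / D + (y : ℚ) / D⌉ := by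
        exact Int.ceil_le_ceil (by linarith [Int.floor_le ((y:ℚ)/D)])

lemma int_le_floor (D : ℤ) (hD : 0 < D) (m y : ℤ) (h : m * D ≤ y) :
    m ≤ ⌊((y : ℤ) : ℚ) / (D : ℚ)⌋ := by
  have hDq : (0 : ℚ) < (D : ℚ) := by exact_mod_cast hD
  rw [Int.le_floor, le_div_iff₀ hDq]
  exact_mod_cast h

lemma triple (p D k n0 na nb : ℤ) (hD : 0 < D) (hp1 : 1 ≤ p) (hn0 : k * D ≤ n0) :
    ⌈((p * nb - na : ℤ) : ℚ) / (D : ℚ)⌉ + (p - 1) * k ≤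
      ⌈((p * n0 - na : ℤ) : ℚ) / D⌉ + ⌈((p * nb - n0 : ℤ) : ℚ) / D⌉ := by
  have h1 : ⌈(((p * nb - na) + (p - 1) * n0 : ℤ) : ℚ) / (D : ℚ)⌉ ≤
      ⌈((p * n0 - na : ℤ) : ℚ) / D⌉ + ⌈((p * nb - n0 : ℤ) : ℚ) / D⌉ := by
    have := ceil_pair D (p * n0 - na) (p * nb - n0)
    have e : (p * n0 - na) + (p * nb - n0) = (p * nb - na) + (p - 1) * n0 := by ring
    rwa [e] at this
  have h2 : (p - 1) * k ≤ ⌊(((p - 1) * n0 : ℤ) : ℚ) / (D : ℚ)⌋ := by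
    apply int_le_floor D hD
    have : (p - 1) * (k * D) ≤ (p - 1) * n0 :=
      mul_le_mul_of_nonneg_left hn0 (by linarith)
    linarith [this]
  have h3 := ceil_floor D (p * nb - na) ((p - 1) * n0)
  omega

lemma swapPair (p D n' nQ na nb : ℤ) (hD : 0 < D) (hlt : n' < nQ)
    (hkey : 2 * D < (p - 1) * (nQ - n')) :
    ⌈((p * n' - na : ℤ) : ℚ) / (D : ℚ)⌉ + ⌈((p * nb - n' : ℤ) : ℚ) / D⌉ ≤
      ⌈((p * nQ - na : ℤ) : ℚ) / D⌉ + ⌈((p * nb - nQ : ℤ) : ℚ) / D⌉ := by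
  set d : ℤ := nQ - n' with hd
  have hdpos : 0 < d := by omega
  have hDq : (0 : ℚ) < (D : ℚ) := by exact_mod_cast hD
  -- key : ⌈d/D⌉ ≤ ⌊p*d/D⌋
  have key : ⌈((d : ℤ) : ℚ) / (D : ℚ)⌉ ≤ ⌊((p * d : ℤ) : ℚ) / (D : ℚ)⌋ := by
    have f1 : ((p * d : ℤ) : ℚ) / D - 1 < ⌊((p * d : ℤ) : ℚ) / D⌋ :=
      Int.sub_one_lt_floor _
    have f2 : (⌈((d : ℤ) : ℚ) / (D : ℚ)⌉ : ℚ) < (d : ℚ) / D + 1 := Int.ceil_lt_add_one _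
    have e2 : (2 : ℚ) < (((p : ℚ) - 1) * (d : ℚ)) / D := by
      rw [lt_div_iff₀ hDq]; exact_mod_cast hkey
    have e1 : ((p * d : ℤ) : ℚ) / D = (d : ℚ) / D + ((p : ℚ) - 1) * (d : ℚ) / D := by
      push_cast; ring
    have : (⌈((d : ℤ) : ℚ) / (D : ℚ)⌉ : ℚ) < (⌊((p * d : ℤ) : ℚ) / D⌋ : ℚ) := by
      linarith [f1, f2, e2, e1]
    exact_mod_cast le_of_lt this
  have ha : ⌈((p * n' - na : ℤ) : ℚ) / (D : ℚ)⌉ + ⌊((p * d : ℤ) : ℚ) / D⌋ ≤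
      ⌈((p * nQ - na : ℤ) : ℚ) / D⌉ := by
    have := ceil_floor D (p * n' - na) (p * d)
    have e : (p * n' - na) + p * d = p * nQ - na := by rw [hd]; ring
    rwa [e] at this
  have hb : ⌈((p * nb - n' : ℤ) : ℚ) / (D : ℚ)⌉ ≤
      ⌈((p * nb - nQ : ℤ) : ℚ) / D⌉ + ⌈((d : ℤ) : ℚ) / D⌉ := by
    have := ceil_pair D (p * nb - nQ) d
    have e : (p * nb - nQ) + d = p * nb - n' := by rw [hd]; ring
    rwa [e] at this
  omega

lemma fixPair (p D n' nQ : ℤ) (hD : 0 < D) (hp1 : 1 ≤ p) (hle : n' ≤ nQ) :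
    ⌈((p * n' - n' : ℤ) : ℚ) / (D : ℚ)⌉ ≤ ⌈((p * nQ - nQ : ℤ) : ℚ) / D⌉ := by
  have hDq : (0 : ℚ) < (D : ℚ) := by exact_mod_cast hD
  apply Int.ceil_le_ceil
  have h' : p * n' - n' ≤ p * nQ - nQ := by nlinarith
  have hq : ((p * n' - n' : ℤ) : ℚ) ≤ ((p * nQ - nQ : ℤ) : ℚ) := by exact_mod_cast h'
  gcongr

lemma ceil_self_ge (p D k n0 : ℤ) (hD : 0 < D) (hp1 : 1 ≤ p) (hn0 : k * D ≤ n0) :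
    (p - 1) * k ≤ ⌈((p * n0 - n0 : ℤ) : ℚ) / (D : ℚ)⌉ := by
  have hDq : (0 : ℚ) < (D : ℚ) := by exact_mod_cast hD
  calc (p - 1) * k = ⌈(((p - 1) * k : ℤ) : ℚ)⌉ := (Int.ceil_intCast _).symm
    _ ≤ ⌈((p * n0 - n0 : ℤ) : ℚ) / (D : ℚ)⌉ := by
        apply Int.ceil_le_ceil
        rw [le_div_iff₀ hDq]
        have h2 : (p - 1) * k * D ≤ p * n0 - n0 := by nlinarith
        exact_mod_cast h2

lemma ceil_self_eq (p D k n0 : ℤ) (hD : 0 < D) (hn0 : n0 = k * D) :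
    ⌈((p * n0 - n0 : ℤ) : ℚ) / (D : ℚ)⌉ = (p - 1) * k := by
  have hDq : ((D : ℤ) : ℚ) ≠ 0 := by exact_mod_cast hD.ne'
  have : ((p * n0 - n0 : ℤ) : ℚ) / (D : ℚ) = (((p - 1) * k : ℤ) : ℚ) := by
    subst hn0; field_simp; push_cast; ring
  rw [this, Int.ceil_intCast]


def nm (a1 b1 a2 b2 : ℤ) (P : ℤ × ℤ) : ℤ := (b1 - b2) * P.1 + (a2 - a1) * P.2

/-- cost of sending `P` to `Q` -/
def cst (p a1 b1 a2 b2 : ℤ) (P Q : ℤ × ℤ) : ℤ := ⌈wt a1 b1 a2 b2 (p • Q - P)⌉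

variable (p a1 b1 a2 b2 : ℤ)

lemma cst_eq (P Q : ℤ × ℤ) :
    cst p a1 b1 a2 b2 P Q =
      ⌈((p * nm a1 b1 a2 b2 Q - nm a1 b1 a2 b2 P : ℤ) : ℚ) /
        ((a2 * b1 - a1 * b2 : ℤ) : ℚ)⌉ := by
  unfold cst wt
  congr 2
  have h1 : (p • Q - P).1 = p * Q.1 - P.1 := rfl
  have h2 : (p • Q - P).2 = p * Q.2 - P.2 := rfl
  rw [h1, h2]
  simp only [nm]
  ring

lemma hTau_eq {n : ℕ} (f : Fin n → ℤ × ℤ) (τ : Equiv.Perm (Fin n)) :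
    hTau p a1 b1 a2 b2 f τ = ∑ i, cst p a1 b1 a2 b2 (f i) (f (τ i)) := rfl

/-- min over permutations, for an arbitrary tuple -/
def Fm {n : ℕ} (f : Fin n → ℤ × ℤ) : ℤ :=
  Finset.univ.inf' (Finset.univ_nonempty_iff.mpr ⟨1⟩)
    fun τ : Equiv.Perm (Fin n) => hTau p a1 b1 a2 b2 f τ

lemma hMin_def (S : Multiset (ℤ × ℤ)) :
    hMin p a1 b1 a2 b2 S = Fm p a1 b1 a2 b2 (listFn S) := rfl

lemma Fm_le {n : ℕ} (f : Fin n → ℤ × ℤ) (τ : Equiv.Perm (Fin n)) :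
    Fm p a1 b1 a2 b2 f ≤ hTau p a1 b1 a2 b2 f τ :=
  Finset.inf'_le _ (Finset.mem_univ τ)

lemma exists_min {n : ℕ} (f : Fin n → ℤ × ℤ) :
    ∃ τ, Fm p a1 b1 a2 b2 f = hTau p a1 b1 a2 b2 f τ := by
  obtain ⟨τ, -, h⟩ := Finset.exists_mem_eq_inf' (Finset.univ_nonempty_iff.mpr ⟨1⟩)
    (fun τ : Equiv.Perm (Fin n) => hTau p a1 b1 a2 b2 f τ)
  exact ⟨τ, h⟩

lemma hTau_comp {m n : ℕ} (e : Fin m ≃ Fin n) (f : Fin n → ℤ × ℤ)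
    (τ : Equiv.Perm (Fin m)) :
    hTau p a1 b1 a2 b2 (f ∘ e) τ =
      hTau p a1 b1 a2 b2 f (e.symm.trans (τ.trans e)) := by
  rw [hTau_eq, hTau_eq]
  apply Fintype.sum_equiv e
  intro i
  simp

lemma Fm_comp {m n : ℕ} (e : Fin m ≃ Fin n) (f : Fin n → ℤ × ℤ) :
    Fm p a1 b1 a2 b2 (f ∘ e) = Fm p a1 b1 a2 b2 f := by
  apply le_antisymm
  · obtain ⟨τ₀, h₀⟩ := exists_min p a1 b1 a2 b2 f
    have key := hTau_comp p a1 b1 a2 b2 e f ((e.trans τ₀).trans e.symm)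
    have he : (e.symm.trans (((e.trans τ₀).trans e.symm).trans e)) = τ₀ := by
      ext j; simp
    rw [he] at key
    rw [h₀, ← key]
    exact Fm_le _ _ _ _ _ _ _
  · obtain ⟨σ₀, h₀⟩ := exists_min p a1 b1 a2 b2 (f ∘ e)
    rw [h₀, hTau_comp]
    exact Fm_le _ _ _ _ _ _ _

/-- two tuples with the same multiset of values differ by a permutation -/
lemma exists_perm_comp {α : Type*} : ∀ {n : ℕ} (f g : Fin n → α),
    (List.ofFn f).Perm (List.ofFn g) → ∃ e : Equiv.Perm (Fin n), g = f ∘ e := by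
  intro n
  induction n with
  | zero => intro f g _; exact ⟨1, funext fun i => i.elim0⟩
  | succ n ih =>
    intro f g hperm
    have hg0 : g 0 ∈ List.ofFn f := by
      rw [hperm.mem_iff]
      rw [List.mem_ofFn]
      exact ⟨0, rfl⟩
    rw [List.mem_ofFn] at hg0
    obtain ⟨j, hj⟩ := hg0
    set f₁ : Fin (n+1) → α := f ∘ Equiv.swap 0 j with hf₁
    have hperm1 : (List.ofFn f₁).Perm (List.ofFn g) :=
      ((Equiv.swap 0 j).ofFn_comp_perm f).trans hperm
    have h10 : f₁ 0 = g 0 := by simp [hf₁, Equiv.swap_apply_left, hj]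
    rw [List.ofFn_succ, List.ofFn_succ, h10] at hperm1
    have htail : (List.ofFn fun i : Fin n => f₁ i.succ).Perm
        (List.ofFn fun i : Fin n => g i.succ) := hperm1.cons_inv
    obtain ⟨e', he'⟩ := ih _ _ htail
    refine ⟨(Equiv.Perm.decomposeFin.symm (0, e')).trans (Equiv.swap 0 j), ?_⟩
    funext x
    induction x using Fin.cases with
    | zero =>
      simp [Equiv.Perm.decomposeFin_symm_apply_zero, Equiv.swap_apply_left, hj, h10.symm]
    | succ i =>
      have := congrFun he' i
      simp only [Function.comp] at this ⊢
      rw [this]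
      simp [Equiv.Perm.decomposeFin_symm_apply_succ, hf₁]

lemma Fm_congr {m n : ℕ} (f : Fin n → ℤ × ℤ) (g : Fin m → ℤ × ℤ)
    (h : (List.ofFn f : Multiset (ℤ × ℤ)) = (List.ofFn g : Multiset (ℤ × ℤ))) :
    Fm p a1 b1 a2 b2 f = Fm p a1 b1 a2 b2 g := by
  have hlen : n = m := by
    have := congrArg Multiset.card h
    simpa using this
  subst hlen
  have hperm : (List.ofFn f).Perm (List.ofFn g) := Multiset.coe_eq_coe.mp h
  obtain ⟨e, he⟩ := exists_perm_comp f g hperm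
  rw [he, Fm_comp]

lemma hMin_eq_Fm (S : Multiset (ℤ × ℤ)) {n : ℕ} (f : Fin n → ℤ × ℤ)
    (h : (List.ofFn f : Multiset (ℤ × ℤ)) = S) :
    hMin p a1 b1 a2 b2 S = Fm p a1 b1 a2 b2 f := by
  rw [hMin_def]
  apply Fm_congr
  rw [h]
  show (↑(List.ofFn (listFn S)) : Multiset (ℤ × ℤ)) = _
  rw [listFn, List.ofFn_get, Multiset.coe_toList]

lemma ofFn_cons {n : ℕ} (Q : ℤ × ℤ) (g : Fin n → ℤ × ℤ) :
    (List.ofFn (Fin.cons Q g) : Multiset (ℤ × ℤ)) =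
      Q ::ₘ (List.ofFn g : Multiset (ℤ × ℤ)) := by
  rw [List.ofFn_succ]
  simp only [Fin.cons_zero, Fin.cons_succ]
  rfl

lemma hMin_cons_eq_Fm (S : Multiset (ℤ × ℤ)) (Q : ℤ × ℤ) :
    hMin p a1 b1 a2 b2 (Q ::ₘ S) =
      Fm p a1 b1 a2 b2 (Fin.cons Q (listFn S)) := by
  apply hMin_eq_Fm
  rw [ofFn_cons]
  congr 1
  show (↑(List.ofFn (listFn S)) : Multiset (ℤ × ℤ)) = S
  rw [listFn, List.ofFn_get, Multiset.coe_toList]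

-- continuation inside namespace St11 (appended for testing with part2 content)

lemma sum_eq_sum_add {n : ℕ} (F G : Fin n → ℤ) (s : Finset (Fin n))
    (h : ∀ j, j ∉ s → F j = G j) :
    ∑ j, F j = ∑ j, G j + ∑ j ∈ s, (F j - G j) := by
  have h1 : ∑ j ∈ s, (F j - G j) = ∑ j, (F j - G j) := by
    apply Finset.sum_subset (Finset.subset_univ s)
    intro x _ hx
    rw [h x hx]; ring
  rw [h1, Finset.sum_sub_distrib]; ring

lemma hTau_cons_symm {n : ℕ} (Q : ℤ × ℤ) (g : Fin n → ℤ × ℤ)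
    (σ₀ : Equiv.Perm (Fin n)) :
    hTau p a1 b1 a2 b2 (Fin.cons Q g) (Equiv.Perm.decomposeFin.symm (0, σ₀)) =
      cst p a1 b1 a2 b2 Q Q + hTau p a1 b1 a2 b2 g σ₀ := by
  rw [hTau_eq, hTau_eq, Fin.sum_univ_succ, Equiv.Perm.decomposeFin_symm_apply_zero]
  simp only [Fin.cons_zero]
  have hterm : ∀ i : Fin n,
      cst p a1 b1 a2 b2 ((Fin.cons Q g : Fin (n+1) → ℤ × ℤ) i.succ)
        ((Fin.cons Q g : Fin (n+1) → ℤ × ℤ)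
          ((Equiv.Perm.decomposeFin.symm ((0 : Fin (n+1)), σ₀)) i.succ)) =
      cst p a1 b1 a2 b2 (g i) (g (σ₀ i)) := by
    intro i
    rw [Equiv.Perm.decomposeFin_symm_apply_succ]
    simp [Equiv.swap_self]
  rw [Finset.sum_congr rfl (fun i _ => hterm i)]

lemma hTau_cons_fix {n : ℕ} (Q : ℤ × ℤ) (g : Fin n → ℤ × ℤ)
    (σ : Equiv.Perm (Fin (n + 1))) (h0 : σ 0 = 0) :
    ∃ σ₀ : Equiv.Perm (Fin n),
      hTau p a1 b1 a2 b2 (Fin.cons Q g) σ =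
        cst p a1 b1 a2 b2 Q Q + hTau p a1 b1 a2 b2 g σ₀ := by
  obtain ⟨⟨q, σ₀⟩, hqe⟩ : ∃ pr, Equiv.Perm.decomposeFin.symm pr = σ :=
    ⟨Equiv.Perm.decomposeFin σ, Equiv.symm_apply_apply _ _⟩
  have hq : q = 0 := by
    rw [← hqe] at h0
    simpa [Equiv.Perm.decomposeFin_symm_apply_zero] using h0
  subst hq
  exact ⟨σ₀, by rw [← hqe, hTau_cons_symm]⟩

/-- S1 : inserting a point costs at most `cst Q Q`. -/
lemma hMin_cons_le (S : Multiset (ℤ × ℤ)) (Q : ℤ × ℤ) :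
    hMin p a1 b1 a2 b2 (Q ::ₘ S) ≤ hMin p a1 b1 a2 b2 S + cst p a1 b1 a2 b2 Q Q := by
  rw [hMin_cons_eq_Fm, hMin_def]
  obtain ⟨σ₀, h₀⟩ := exists_min p a1 b1 a2 b2 (listFn S)
  calc Fm p a1 b1 a2 b2 (Fin.cons Q (listFn S)) ≤
      hTau p a1 b1 a2 b2 (Fin.cons Q (listFn S)) (Equiv.Perm.decomposeFin.symm (0, σ₀)) :=
        Fm_le _ _ _ _ _ _ _
    _ = cst p a1 b1 a2 b2 Q Q + hTau p a1 b1 a2 b2 (listFn S) σ₀ := hTau_cons_symm _ _ _ _ _ _ _ _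
    _ = Fm p a1 b1 a2 b2 (listFn S) + cst p a1 b1 a2 b2 Q Q := by rw [← h₀]; ring

/-- S2 : removing a point of weight ≥ k decreases `hMin` by at least `(p-1)k`. -/
lemma hMin_cons_ge (hD : 0 < a2 * b1 - a1 * b2) (hp1 : 1 ≤ p)
    (S : Multiset (ℤ × ℤ)) (Q : ℤ × ℤ) (k : ℤ)
    (hQ : k * (a2 * b1 - a1 * b2) ≤ nm a1 b1 a2 b2 Q) :
    hMin p a1 b1 a2 b2 S + (p - 1) * k ≤ hMin p a1 b1 a2 b2 (Q ::ₘ S) := by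
  rw [hMin_cons_eq_Fm, hMin_def]
  set g := listFn S with hg
  set f : Fin (S.toList.length + 1) → ℤ × ℤ := Fin.cons Q g with hf
  obtain ⟨σ, hσ⟩ := exists_min p a1 b1 a2 b2 f
  rw [hσ]
  have hQQ : (p - 1) * k ≤ cst p a1 b1 a2 b2 Q Q := by
    rw [cst_eq]
    exact ceil_self_ge p _ k _ hD hp1 hQ
  by_cases h0 : σ 0 = 0
  · obtain ⟨σ₀, he⟩ := hTau_cons_fix p a1 b1 a2 b2 Q g σ h0
    rw [he]
    have := Fm_le p a1 b1 a2 b2 g σ₀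
    linarith
  · set a := σ⁻¹ 0 with ha
    have haσ : σ a = 0 := Equiv.apply_symm_apply σ 0
    have ha0 : a ≠ 0 := by
      intro h; rw [h] at haσ; exact h0 haσ
    set σ' := σ * Equiv.swap 0 a with hσ'
    have hσ'0 : σ' 0 = 0 := by
      rw [hσ', Equiv.Perm.mul_apply, Equiv.swap_apply_left, haσ]
    have hσ'a : σ' a = σ 0 := by
      rw [hσ', Equiv.Perm.mul_apply, Equiv.swap_apply_right]
    have hsum : hTau p a1 b1 a2 b2 f σ = hTau p a1 b1 a2 b2 f σ' +
        ∑ j ∈ ({0, a} : Finset (Fin _)),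
          (cst p a1 b1 a2 b2 (f j) (f (σ j)) - cst p a1 b1 a2 b2 (f j) (f (σ' j))) := by
      rw [hTau_eq, hTau_eq]
      apply sum_eq_sum_add
      intro j hj
      simp only [Finset.mem_insert, Finset.mem_singleton] at hj
      push_neg at hj
      rw [hσ', Equiv.Perm.mul_apply, Equiv.swap_apply_of_ne_of_ne hj.1 hj.2]
    rw [Finset.sum_pair (Ne.symm ha0)] at hsum
    obtain ⟨σ₀, he⟩ := hTau_cons_fix p a1 b1 a2 b2 Q g σ' hσ'0
    have hfa0 : f (σ a) = Q := by rw [haσ]; rfl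
    have hf'0 : f (σ' 0) = Q := by rw [hσ'0]; rfl
    have hf0 : f 0 = Q := rfl
    rw [hf0, hfa0, hf'0, hσ'a] at hsum
    -- hsum : hTau f σ = hTau f σ' + (cst Q (f (σ 0)) - cst Q Q) + (cst (f a) Q - cst (f a) (f (σ 0)))
    have htriple : cst p a1 b1 a2 b2 (f a) (f (σ 0)) + (p - 1) * k ≤
        cst p a1 b1 a2 b2 (f a) Q + cst p a1 b1 a2 b2 Q (f (σ 0)) := by
      rw [cst_eq, cst_eq, cst_eq]
      exact triple p _ k (nm a1 b1 a2 b2 Q) (nm a1 b1 a2 b2 (f a))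
        (nm a1 b1 a2 b2 (f (σ 0))) hD hp1 hQ
    have hFm := Fm_le p a1 b1 a2 b2 g σ₀
    linarith [hsum, he]

/-- S3 : replacing a point by one of smaller weight does not increase `hMin`. -/
lemma hMin_swap (hD : 0 < a2 * b1 - a1 * b2) (hp1 : 1 ≤ p)
    (S : Multiset (ℤ × ℤ)) (Q P' : ℤ × ℤ)
    (hlt : nm a1 b1 a2 b2 P' < nm a1 b1 a2 b2 Q)
    (hkey : 2 * (a2 * b1 - a1 * b2) < (p - 1) * (nm a1 b1 a2 b2 Q - nm a1 b1 a2 b2 P')) :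
    hMin p a1 b1 a2 b2 (P' ::ₘ S) ≤ hMin p a1 b1 a2 b2 (Q ::ₘ S) := by
  rw [hMin_cons_eq_Fm, hMin_cons_eq_Fm]
  set g := listFn S with hg
  set f : Fin (S.toList.length + 1) → ℤ × ℤ := Fin.cons Q g with hf
  set f' : Fin (S.toList.length + 1) → ℤ × ℤ := Fin.cons P' g with hf'
  obtain ⟨σ, hσ⟩ := exists_min p a1 b1 a2 b2 f
  rw [hσ]
  have hfx : ∀ x : Fin _, x ≠ 0 → f' x = f x := by
    intro x hx
    induction x using Fin.cases with
    | zero => exact absurd rfl hx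
    | succ i => rw [hf, hf']; simp [Fin.cons_succ]
  refine le_trans (Fm_le p a1 b1 a2 b2 f' σ) ?_
  by_cases h0 : σ 0 = 0
  · rw [hTau_eq, hTau_eq]
    apply Finset.sum_le_sum
    intro i _
    by_cases hi : i = 0
    · subst hi
      rw [h0, hf, hf']
      simp only [Fin.cons_zero]
      rw [cst_eq, cst_eq]
      exact fixPair p _ _ _ hD hp1 hlt.le
    · have hσi : σ i ≠ 0 := fun h => hi (σ.injective (h.trans h0.symm))
      rw [hfx i hi, hfx (σ i) hσi]
  · set a := σ⁻¹ 0 with ha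
    have haσ : σ a = 0 := Equiv.apply_symm_apply σ 0
    have ha0 : a ≠ 0 := by
      intro h; rw [h] at haσ; exact h0 haσ
    have hsum : hTau p a1 b1 a2 b2 f' σ = hTau p a1 b1 a2 b2 f σ +
        ∑ j ∈ ({0, a} : Finset (Fin _)),
          (cst p a1 b1 a2 b2 (f' j) (f' (σ j)) - cst p a1 b1 a2 b2 (f j) (f (σ j))) := by
      rw [hTau_eq, hTau_eq]
      apply sum_eq_sum_add
      intro j hj
      simp only [Finset.mem_insert, Finset.mem_singleton] at hj
      push_neg at hj
      have hσj : σ j ≠ 0 := by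
        intro h
        exact hj.2 (by rw [ha, ← h, Equiv.Perm.inv_def, Equiv.symm_apply_apply])
      rw [hfx j hj.1, hfx (σ j) hσj]
    rw [Finset.sum_pair (Ne.symm ha0)] at hsum
    have hb0 : σ 0 ≠ 0 := h0
    have e1 : f' (σ 0) = f (σ 0) := hfx _ hb0
    have e2 : f' (0 : Fin _) = P' := rfl
    have e3 : f (0 : Fin _) = Q := rfl
    have e4 : f (σ a) = Q := by rw [haσ]; rfl
    have e5 : f' (σ a) = P' := by rw [haσ]; rfl
    have e6 : f' a = f a := hfx a ha0
    rw [e1, e2, e3, e4, e5, e6] at hsum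
    have hswap : cst p a1 b1 a2 b2 (f a) P' + cst p a1 b1 a2 b2 P' (f (σ 0)) ≤
        cst p a1 b1 a2 b2 (f a) Q + cst p a1 b1 a2 b2 Q (f (σ 0)) := by
      rw [cst_eq, cst_eq, cst_eq, cst_eq]
      exact swapPair p _ (nm a1 b1 a2 b2 P') (nm a1 b1 a2 b2 Q)
        (nm a1 b1 a2 b2 (f a)) (nm a1 b1 a2 b2 (f (σ 0))) hD hlt hkey
    linarith [hsum]


lemma wt_eq' (P : ℤ × ℤ) :
    wt a1 b1 a2 b2 P = ((nm a1 b1 a2 b2 P : ℤ) : ℚ) / ((a2 * b1 - a1 * b2 : ℤ) : ℚ) := rfl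

lemma finset_swap_le (hD : 0 < a2 * b1 - a1 * b2) (hp1 : 1 ≤ p)
    (hkey : ∀ X Y : ℤ × ℤ, nm a1 b1 a2 b2 X < nm a1 b1 a2 b2 Y →
      2 * (a2 * b1 - a1 * b2) < (p - 1) * (nm a1 b1 a2 b2 Y - nm a1 b1 a2 b2 X))
    (Mset : Set (ℤ × ℤ)) (T : Finset (ℤ × ℤ)) (hTM : ↑T ⊆ Mset)
    (hcond : ∀ P' ∈ T, ∀ Q, Q ∈ Mset → Q ∉ T →
      nm a1 b1 a2 b2 P' < nm a1 b1 a2 b2 Q) :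
    ∀ m : ℕ, ∀ S : Finset (ℤ × ℤ), ↑S ⊆ Mset → S.card = T.card → (S \ T).card ≤ m →
      hMin p a1 b1 a2 b2 T.val ≤ hMin p a1 b1 a2 b2 S.val := by
  intro m
  induction m with
  | zero =>
    intro S hSM hc hle
    have hempty : S \ T = ∅ := Finset.card_eq_zero.mp (Nat.le_zero.mp hle)
    have hsub : S ⊆ T := Finset.sdiff_eq_empty_iff_subset.mp hempty
    have : S = T := Finset.eq_of_subset_of_card_le hsub (le_of_eq hc.symm)
    rw [this]
  | succ m ih =>
    intro S hSM hc hle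
    by_cases hempty : S \ T = ∅
    · have hsub : S ⊆ T := Finset.sdiff_eq_empty_iff_subset.mp hempty
      have : S = T := Finset.eq_of_subset_of_card_le hsub (le_of_eq hc.symm)
      rw [this]
    · obtain ⟨Q, hQmem⟩ := Finset.nonempty_iff_ne_empty.mpr hempty
      rw [Finset.mem_sdiff] at hQmem
      obtain ⟨hQS, hQT⟩ := hQmem
      have hTS : (T \ S).Nonempty := by
        rw [Finset.nonempty_iff_ne_empty]
        intro h
        have hsub : T ⊆ S := Finset.sdiff_eq_empty_iff_subset.mp h
        have : T = S := Finset.eq_of_subset_of_card_le hsub (le_of_eq hc)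
        rw [this] at hQT
        exact hQT hQS
      obtain ⟨P', hP'mem⟩ := hTS
      rw [Finset.mem_sdiff] at hP'mem
      obtain ⟨hP'T, hP'S⟩ := hP'mem
      have hlt : nm a1 b1 a2 b2 P' < nm a1 b1 a2 b2 Q :=
        hcond P' hP'T Q (hSM hQS) hQT
      have hP'e : P' ∉ S.erase Q := fun h => hP'S (Finset.mem_of_mem_erase h)
      set S' := insert P' (S.erase Q) with hS'
      have hcard' : S'.card = T.card := by
        rw [hS', Finset.card_insert_of_notMem hP'e, Finset.card_erase_of_mem hQS]
        have : 0 < S.card := Finset.card_pos.mpr ⟨Q, hQS⟩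
        omega
      have hS'M : ↑S' ⊆ Mset := by
        intro x hx
        rw [Finset.coe_insert, Set.mem_insert_iff] at hx
        rcases hx with rfl | hx
        · exact hTM hP'T
        · exact hSM (Finset.mem_coe.mpr (Finset.mem_of_mem_erase (Finset.mem_coe.mp hx)))
      have hS'le : (S' \ T).card ≤ m := by
        rw [hS', Finset.insert_sdiff_of_mem _ hP'T, Finset.erase_sdiff_comm]
        have hQsd : Q ∈ S \ T := Finset.mem_sdiff.mpr ⟨hQS, hQT⟩
        rw [Finset.card_erase_of_mem hQsd]
        omega
      refine le_trans (ih S' hS'M hcard' hS'le) ?_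
      have e1 : S'.val = P' ::ₘ (S.erase Q).val := Finset.insert_val_of_notMem hP'e
      have e2 : S.val = Q ::ₘ (S.erase Q).val := by
        rw [Finset.erase_val, Multiset.cons_erase (Finset.mem_val.mpr hQS)]
      rw [e1, e2]
      exact hMin_swap p a1 b1 a2 b2 hD hp1 _ Q P' hlt (hkey _ _ hlt)

lemma finset_lower (hD : 0 < a2 * b1 - a1 * b2) (hp1 : 1 ≤ p)
    (hkey : ∀ X Y : ℤ × ℤ, nm a1 b1 a2 b2 X < nm a1 b1 a2 b2 Y →
      2 * (a2 * b1 - a1 * b2) < (p - 1) * (nm a1 b1 a2 b2 Y - nm a1 b1 a2 b2 X))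
    (Mset : Set (ℤ × ℤ)) (T : Finset (ℤ × ℤ)) (hTM : ↑T ⊆ Mset)
    (hcond : ∀ P' ∈ T, ∀ Q, Q ∈ Mset → Q ∉ T →
      nm a1 b1 a2 b2 P' < nm a1 b1 a2 b2 Q)
    (k' : ℤ)
    (hout : ∀ Q, Q ∈ Mset → Q ∉ T → k' * (a2 * b1 - a1 * b2) ≤ nm a1 b1 a2 b2 Q) :
    ∀ i : ℕ, ∀ S : Finset (ℤ × ℤ), ↑S ⊆ Mset → S.card = T.card + i →
      hMin p a1 b1 a2 b2 T.val + (i : ℤ) * ((p - 1) * k') ≤ hMin p a1 b1 a2 b2 S.val := by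
  intro i
  induction i with
  | zero =>
    intro S hSM hc
    simpa using finset_swap_le p a1 b1 a2 b2 hD hp1 hkey Mset T hTM hcond
      (S \ T).card S hSM (by omega) le_rfl
  | succ i ih =>
    intro S hSM hc
    have hSd : (S \ T).Nonempty := by
      rw [Finset.nonempty_iff_ne_empty]
      intro h
      have hsub : S ⊆ T := Finset.sdiff_eq_empty_iff_subset.mp h
      have := Finset.card_le_card hsub
      omega
    obtain ⟨Q, hQmem⟩ := hSd
    rw [Finset.mem_sdiff] at hQmem
    obtain ⟨hQS, hQT⟩ := hQmem
    have e2 : S.val = Q ::ₘ (S.erase Q).val := by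
      rw [Finset.erase_val, Multiset.cons_erase (Finset.mem_val.mpr hQS)]
    have hstep : hMin p a1 b1 a2 b2 (S.erase Q).val + (p - 1) * k' ≤
        hMin p a1 b1 a2 b2 S.val := by
      rw [e2]
      exact hMin_cons_ge p a1 b1 a2 b2 hD hp1 _ Q k' (hout Q (hSM hQS) hQT)
    have hih := ih (S.erase Q)
      (fun x hx => hSM (Finset.mem_coe.mpr (Finset.mem_of_mem_erase (Finset.mem_coe.mp hx))))
      (by rw [Finset.card_erase_of_mem hQS]; omega)
    push_cast
    push_cast at hih
    linarith

lemma finset_upper (T : Finset (ℤ × ℤ)) (k' : ℤ) :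
    ∀ B : Finset (ℤ × ℤ), (∀ Q ∈ B, Q ∉ T) →
      (∀ Q ∈ B, cst p a1 b1 a2 b2 Q Q = (p - 1) * k') →
      hMin p a1 b1 a2 b2 (T ∪ B).val ≤
        hMin p a1 b1 a2 b2 T.val + (B.card : ℤ) * ((p - 1) * k') := by
  intro B
  induction B using Finset.induction_on with
  | empty => intro _ _; simp
  | @insert a B' haB ih =>
    intro hdisj hval
    have key : T ∪ insert a B' = insert a (T ∪ B') := Finset.union_insert a T B'
    have haTB : a ∉ T ∪ B' := by
      rw [Finset.mem_union]
      rintro (h | h)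
      · exact hdisj a (Finset.mem_insert_self a B') h
      · exact haB h
    have e1 : (T ∪ insert a B').val = a ::ₘ (T ∪ B').val := by
      rw [key, Finset.insert_val_of_notMem haTB]
    rw [e1]
    have h1 := hMin_cons_le p a1 b1 a2 b2 (T ∪ B').val a
    have h2 := ih (fun Q hQ => hdisj Q (Finset.mem_insert_of_mem hQ))
      (fun Q hQ => hval Q (Finset.mem_insert_of_mem hQ))
    have h3 := hval a (Finset.mem_insert_self a B')
    rw [Finset.card_insert_of_notMem haB]
    push_cast
    push_cast at h2
    linarith

end St11

open St11 in
theorem statement11' (p a1 b1 a2 b2 : ℤ)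
    (hD : 0 < a2 * b1 - a1 * b2)
    (hpg : 2 * ((a2 * b1 - a1 * b2 : ℤ) : ℚ) /
      (Int.gcd (a1 - a2) (b1 - b2) : ℚ) + 1 < (p : ℚ))
    (k : ℕ) (hk : 1 ≤ k)
    (Tk T'k : Finset (ℤ × ℤ))
    (hTk : (Tk : Set (ℤ × ℤ)) =
      {P ∈ MDelta a1 b1 a2 b2 | wt a1 b1 a2 b2 P < (k : ℚ)})
    (hT'k : (T'k : Set (ℤ × ℤ)) =
      {P ∈ MDelta a1 b1 a2 b2 | wt a1 b1 a2 b2 P ≤ (k : ℚ)})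
    (i : ℕ) (hi : i ≤ T'k.card - Tk.card) :
    IsLeast {h : ℤ | ∃ S : Finset (ℤ × ℤ),
        (S : Set (ℤ × ℤ)) ⊆ MDelta a1 b1 a2 b2 ∧ S.card = Tk.card + i ∧
        h = hMin p a1 b1 a2 b2 S.val}
      (hMin p a1 b1 a2 b2 Tk.val + (i : ℤ) * (k : ℤ) * (p - 1)) := by
  classical
  set Mset := MDelta a1 b1 a2 b2 with hMset
  set D := a2 * b1 - a1 * b2 with hDdef
  set g : ℕ := Int.gcd (a1 - a2) (b1 - b2) with hgdef
  have hDq : (0 : ℚ) < ((D : ℤ) : ℚ) := by exact_mod_cast hD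
  -- gcd is positive
  have hg0 : g ≠ 0 := by
    intro h
    rw [hgdef, Int.gcd_eq_zero_iff] at h
    have ha : a1 = a2 := by omega
    have hb : b1 = b2 := by omega
    rw [hDdef, ha, hb] at hD
    simp at hD
  have hgpos : (0 : ℤ) < (g : ℤ) := by exact_mod_cast Nat.pos_of_ne_zero hg0
  have hgQ : (0 : ℚ) < (g : ℚ) := by exact_mod_cast hgpos
  -- p > 1
  have hfrac : (0 : ℚ) < 2 * ((D : ℤ) : ℚ) / (g : ℚ) := by positivity
  have hp1Q : (1 : ℚ) < (p : ℚ) := by rw [hgdef] at hpg; linarith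
  have hp1 : 1 ≤ p := by exact_mod_cast hp1Q.le
  -- the gcd inequality
  have hgkey : 2 * D < (p - 1) * (g : ℤ) := by
    have h1 : 2 * ((D : ℤ) : ℚ) / (g : ℚ) < (p : ℚ) - 1 := by
      rw [hgdef] at hpg; linarith
    have h2 : 2 * ((D : ℤ) : ℚ) < ((p : ℚ) - 1) * (g : ℚ) :=
      (div_lt_iff₀ hgQ).mp h1
    exact_mod_cast h2
  -- every numerator is divisible by g
  have hdvd : ∀ X : ℤ × ℤ, (g : ℤ) ∣ nm a1 b1 a2 b2 X := by
    intro X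
    apply dvd_add
    · exact Dvd.dvd.mul_right (by rw [hgdef]; exact Int.gcd_dvd_right _ _) _
    · refine Dvd.dvd.mul_right ?_ _
      have : a2 - a1 = -(a1 - a2) := by ring
      rw [this]
      exact (dvd_neg).mpr (by rw [hgdef]; exact Int.gcd_dvd_left _ _)
  have hkey : ∀ X Y : ℤ × ℤ, nm a1 b1 a2 b2 X < nm a1 b1 a2 b2 Y →
      2 * D < (p - 1) * (nm a1 b1 a2 b2 Y - nm a1 b1 a2 b2 X) := by
    intro X Y hlt
    have hd : (g : ℤ) ∣ (nm a1 b1 a2 b2 Y - nm a1 b1 a2 b2 X) :=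
      dvd_sub (hdvd Y) (hdvd X)
    have hge : (g : ℤ) ≤ nm a1 b1 a2 b2 Y - nm a1 b1 a2 b2 X :=
      Int.le_of_dvd (by omega) hd
    nlinarith
  -- membership unfoldings
  have hTmem : ∀ P : ℤ × ℤ, P ∈ Tk ↔ P ∈ Mset ∧ wt a1 b1 a2 b2 P < (k : ℚ) := by
    intro P
    have := Set.ext_iff.mp hTk P
    simpa using this
  have hT'mem : ∀ P : ℤ × ℤ, P ∈ T'k ↔ P ∈ Mset ∧ wt a1 b1 a2 b2 P ≤ (k : ℚ) := by
    intro P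
    have := Set.ext_iff.mp hT'k P
    simpa using this
  -- weight/numerator translations
  have hwlt : ∀ P : ℤ × ℤ, wt a1 b1 a2 b2 P < (k : ℚ) ↔
      nm a1 b1 a2 b2 P < (k : ℤ) * D := by
    intro P
    rw [wt_eq' a1 b1 a2 b2 P, div_lt_iff₀ hDq]
    constructor
    · intro h; exact_mod_cast h
    · intro h; exact_mod_cast h
  have hwle : ∀ P : ℤ × ℤ, wt a1 b1 a2 b2 P ≤ (k : ℚ) ↔
      nm a1 b1 a2 b2 P ≤ (k : ℤ) * D := by
    intro P
    rw [wt_eq' a1 b1 a2 b2 P, div_le_iff₀ hDq]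
    constructor
    · intro h; exact_mod_cast h
    · intro h; exact_mod_cast h
  have hTM : ↑Tk ⊆ Mset := fun x hx => ((hTmem x).mp (Finset.mem_coe.mp hx)).1
  have hT'M : ↑T'k ⊆ Mset := fun x hx => ((hT'mem x).mp (Finset.mem_coe.mp hx)).1
  have hout : ∀ Q, Q ∈ Mset → Q ∉ Tk → (k : ℤ) * D ≤ nm a1 b1 a2 b2 Q := by
    intro Q hQM hQT
    have : ¬ (wt a1 b1 a2 b2 Q < (k : ℚ)) := fun h => hQT ((hTmem Q).mpr ⟨hQM, h⟩)
    rw [hwlt] at this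
    omega
  have hcond : ∀ P' ∈ Tk, ∀ Q, Q ∈ Mset → Q ∉ Tk →
      nm a1 b1 a2 b2 P' < nm a1 b1 a2 b2 Q := by
    intro P' hP' Q hQM hQT
    have h1 := ((hTmem P').mp hP').2
    rw [hwlt] at h1
    have h2 := hout Q hQM hQT
    omega
  -- boundary points
  have hbdry : ∀ Q ∈ T'k, Q ∉ Tk → cst p a1 b1 a2 b2 Q Q = (p - 1) * (k : ℤ) := by
    intro Q hQ hQT
    obtain ⟨hQM, hQle⟩ := (hT'mem Q).mp hQ
    have h1 := hout Q hQM hQT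
    rw [hwle] at hQle
    have heq : nm a1 b1 a2 b2 Q = (k : ℤ) * D := le_antisymm hQle h1
    rw [cst_eq]
    exact ceil_self_eq p D (k : ℤ) _ hD heq
  -- choose the boundary set B
  have hTsub : Tk ⊆ T'k := by
    intro x hx
    obtain ⟨h1, h2⟩ := (hTmem x).mp hx
    exact (hT'mem x).mpr ⟨h1, h2.le⟩
  have hile : i ≤ (T'k \ Tk).card := by
    rw [Finset.card_sdiff_of_subset hTsub]
    exact hi
  obtain ⟨B, hBsub, hBcard⟩ := Finset.exists_subset_card_eq hile
  have hBdisjT : ∀ Q ∈ B, Q ∉ Tk := fun Q hQ =>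
    (Finset.mem_sdiff.mp (hBsub hQ)).2
  have hBT' : ∀ Q ∈ B, Q ∈ T'k := fun Q hQ =>
    (Finset.mem_sdiff.mp (hBsub hQ)).1
  have hDisj : Disjoint Tk B := Finset.disjoint_right.mpr hBdisjT
  have hScard : (Tk ∪ B).card = Tk.card + i := by
    rw [Finset.card_union_of_disjoint hDisj, hBcard]
  have hSsubM : ↑(Tk ∪ B) ⊆ Mset := by
    intro x hx
    rw [Finset.coe_union, Set.mem_union] at hx
    rcases hx with hx | hx
    · exact hTM hx
    · exact hT'M (Finset.mem_coe.mpr (hBT' x (Finset.mem_coe.mp hx)))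
  have harith : (i : ℤ) * (k : ℤ) * (p - 1) = (i : ℤ) * ((p - 1) * (k : ℤ)) := by ring
  constructor
  · refine ⟨Tk ∪ B, hSsubM, hScard, ?_⟩
    apply le_antisymm
    · have h2 := finset_lower p a1 b1 a2 b2 hD hp1 hkey Mset Tk hTM hcond (k : ℤ)
        hout i (Tk ∪ B) hSsubM hScard
      linarith [h2, harith]
    · have h1 := finset_upper p a1 b1 a2 b2 Tk (k : ℤ) B hBdisjT
        (fun Q hQ => hbdry Q (hBT' Q hQ) (hBdisjT Q hQ))
      rw [hBcard] at h1
      linarith [h1, harith]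
  · rintro h ⟨S, hSM, hScard', rfl⟩
    have h2 := finset_lower p a1 b1 a2 b2 hD hp1 hkey Mset Tk hTM hcond (k : ℤ)
      hout i S hSM hScard'
    linarith [h2, harith]

/-- Let `g = gcd(a1-a2, b1-b2)` and `p` a prime with `p ∤ D` and
`p > 2·D/g + 1`.  For every `k ≥ 1` and `0 ≤ i ≤ x'_k - x_k`, the minimum of
`h(S)` over subsets `S ⊆ M(Δ)` with `#S = x_k + i` equals
`h(T_k) + i·k·(p-1)`. -/
theorem statement11 (p a1 b1 a2 b2 : ℤ)
    (ha1 : 0 ≤ a1) (hb1 : 0 ≤ b1) (ha2 : 0 ≤ a2) (hb2 : 0 ≤ b2)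
    (hD : 0 < a2 * b1 - a1 * b2)
    (hp : Prime p) (hpD : ¬ p ∣ (a2 * b1 - a1 * b2))
    (hpg : 2 * ((a2 * b1 - a1 * b2 : ℤ) : ℚ) /
      (Int.gcd (a1 - a2) (b1 - b2) : ℚ) + 1 < (p : ℚ))
    (k : ℕ) (hk : 1 ≤ k)
    (Tk T'k : Finset (ℤ × ℤ))
    (hTk : (Tk : Set (ℤ × ℤ)) =
      {P ∈ MDelta a1 b1 a2 b2 | wt a1 b1 a2 b2 P < (k : ℚ)})
    (hT'k : (T'k : Set (ℤ × ℤ)) =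
      {P ∈ MDelta a1 b1 a2 b2 | wt a1 b1 a2 b2 P ≤ (k : ℚ)})
    (i : ℕ) (hi : i ≤ T'k.card - Tk.card) :
    IsLeast {h : ℤ | ∃ S : Finset (ℤ × ℤ),
        (S : Set (ℤ × ℤ)) ⊆ MDelta a1 b1 a2 b2 ∧ S.card = Tk.card + i ∧
        h = hMin p a1 b1 a2 b2 S.val}
      (hMin p a1 b1 a2 b2 Tk.val + (i : ℤ) * (k : ℤ) * (p - 1)) := by
  exact statement11' p a1 b1 a2 b2 hD hpg k hk Tk T'k hTk hT'k i hi
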